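/- For σ∈[0,1) and τ=√(1-σ²), define over α∈(0,π/2] with σ=cos α: (1/π)∫₀^{2π} |sin θ · sin(θ+α)| dθ = (2/π)(sin α + (π/2 - α)cos α). -/

import Mathlib

open Real

private lemma antideriv (α a b : ℝ) :
    ∫ θ in a..b, Real.sin θ * Real.sin (θ + α) =
      (b * Real.cos α / 2 - Real.sin (2*b+α)/4) -
      (a * Real.cos α / 2 - Real.sin (2*a+α)/4) := by
  apply intervalIntegral.integral_eq_sub_of_hasDerivAt
  · intro x hx
    have h1 : HasDerivAt (fun θ : ℝ => θ * Real.cos α / 2) (Real.cos α / 2) x := by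
      simpa using ((hasDerivAt_id x).mul_const (Real.cos α)).div_const 2
    have hi : HasDerivAt (fun θ : ℝ => 2*θ+α) 2 x := by
      simpa using ((hasDerivAt_id x).const_mul 2).add_const α
    have h2 : HasDerivAt (fun θ : ℝ => Real.sin (2*θ+α) / 4)
        (Real.cos (2*x+α) * 2 / 4) x :=
      ((Real.hasDerivAt_sin _).comp x hi).div_const 4
    have := h1.sub h2
    convert this using 1
    · rfl
    have e1 : Real.cos (2*x+α) = Real.cos x * Real.cos (x+α) - Real.sin x * Real.sin (x+α) := by
      rw [show 2*x+α = x + (x+α) by ring, Real.cos_add]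
    have e2 : Real.cos α = Real.cos x * Real.cos (x+α) + Real.sin x * Real.sin (x+α) := by
      rw [show α = (x+α) - x by ring, Real.cos_sub]; ring
    rw [e1, e2]; ring
  · exact (Real.continuous_sin.mul (Real.continuous_sin.comp
      (continuous_id.add continuous_const))).intervalIntegrable _ _

theorem angular_integral (α : ℝ) (hα0 : 0 < α) (hα1 : α ≤ π / 2) :
    (1 / π) * ∫ θ in (0:ℝ)..(2 * π), |Real.sin θ * Real.sin (θ + α)| =
      (2 / π) * (Real.sin α + (π / 2 - α) * Real.cos α) := by
  have hπ : (0:ℝ) < π := Real.pi_pos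
  have hcont : Continuous (fun θ : ℝ => |Real.sin θ * Real.sin (θ + α)|) :=
    (Real.continuous_sin.mul (Real.continuous_sin.comp
      (continuous_id.add continuous_const))).abs
  have hαπ : α ≤ π := hα1.trans (by linarith)
  -- periodicity : integral over [π, 2π] equals integral over [0, π]
  have hper : (∫ θ in (π:ℝ)..(2*π), |Real.sin θ * Real.sin (θ + α)|)
      = ∫ θ in (0:ℝ)..π, |Real.sin θ * Real.sin (θ + α)| := by
    have := intervalIntegral.integral_comp_add_right (a := (0:ℝ)) (b := π)
      (fun θ => |Real.sin θ * Real.sin (θ + α)|) π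
    rw [zero_add, show π + π = 2*π by ring] at this
    rw [← this]
    apply intervalIntegral.integral_congr
    intro x _
    simp only
    rw [show x + π + α = (x + α) + π by ring, Real.sin_add_pi, Real.sin_add_pi]
    rw [neg_mul_neg]
  have hsplit2 : (∫ θ in (0:ℝ)..(2*π), |Real.sin θ * Real.sin (θ + α)|)
      = 2 * ∫ θ in (0:ℝ)..π, |Real.sin θ * Real.sin (θ + α)| := by
    rw [← intervalIntegral.integral_add_adjacent_intervals
      (hcont.intervalIntegrable 0 π) (hcont.intervalIntegrable π (2*π)), hper]
    ring
  -- split [0, π] at π - α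
  have hsplit : (∫ θ in (0:ℝ)..π, |Real.sin θ * Real.sin (θ + α)|)
      = (∫ θ in (0:ℝ)..(π - α), |Real.sin θ * Real.sin (θ + α)|)
      + ∫ θ in (π - α)..π, |Real.sin θ * Real.sin (θ + α)| := by
    rw [intervalIntegral.integral_add_adjacent_intervals
      (hcont.intervalIntegrable 0 (π - α)) (hcont.intervalIntegrable (π - α) π)]
  have h1 : (∫ θ in (0:ℝ)..(π - α), |Real.sin θ * Real.sin (θ + α)|)
      = ∫ θ in (0:ℝ)..(π - α), Real.sin θ * Real.sin (θ + α) := by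
    apply intervalIntegral.integral_congr
    intro x hx
    rw [Set.uIcc_of_le (by linarith)] at hx
    obtain ⟨hx0, hx1⟩ := hx
    have hs1 : 0 ≤ Real.sin x := Real.sin_nonneg_of_nonneg_of_le_pi hx0 (by linarith)
    have hs2 : 0 ≤ Real.sin (x + α) :=
      Real.sin_nonneg_of_nonneg_of_le_pi (by linarith) (by linarith)
    exact abs_of_nonneg (mul_nonneg hs1 hs2)
  have h2 : (∫ θ in (π - α)..π, |Real.sin θ * Real.sin (θ + α)|)
      = ∫ θ in (π - α)..π, -(Real.sin θ * Real.sin (θ + α)) := by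
    apply intervalIntegral.integral_congr
    intro x hx
    rw [Set.uIcc_of_le (by linarith)] at hx
    obtain ⟨hx0, hx1⟩ := hx
    have hs1 : 0 ≤ Real.sin x := Real.sin_nonneg_of_nonneg_of_le_pi (by linarith) hx1
    have hs2 : Real.sin (x + α) ≤ 0 := by
      have : 0 ≤ Real.sin (x + α - π) :=
        Real.sin_nonneg_of_nonneg_of_le_pi (by linarith) (by linarith)
      rw [Real.sin_sub_pi] at this
      linarith
    exact abs_of_nonpos (mul_nonpos_of_nonneg_of_nonpos hs1 hs2)
  rw [hsplit2, hsplit, h1, h2, intervalIntegral.integral_neg, antideriv, antideriv]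
  have e1 : Real.sin (2*(π - α)+α) = -Real.sin α := by
    rw [show 2*(π - α)+α = 2*π - α by ring, Real.sin_sub, Real.sin_two_pi,
      Real.cos_two_pi]
    ring
  have e2 : Real.sin (2*π+α) = Real.sin α := by
    rw [Real.sin_add, Real.sin_two_pi, Real.cos_two_pi]; ring
  have e3 : Real.sin (2*0+α) = Real.sin α := by norm_num
  rw [e1, e2, e3]
  field_simp
  ring
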